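/- arXiv:1312.0190 — 2 statements merged into one kernel-verified Lean document; each statement's English description precedes it below -/
import Mathlib

section
/- Let H be a finite directed multigraph with arcs labeled by elements of a group G, with a start vertex s and a set of final vertices Z. Suppose (a) every walk from s to a vertex in Z whose intermediate vertices are pairwise distinct has label e, and (b) for every vertex q from which some vertex of Z is reachable, every walk π₁ from s to q with distinct vertices and every closed walk π₂ at q with distinct intermediate vertices satisfy l(π₁)·l(π₂)·l(π₁)⁻¹ = e. Then every walk from s to a vertex in Z has label e. -/
/-- A walk in a directed multigraph with edge set `E`, source/target maps
`src tgt : E → V`: `IsWalk src tgt a b l` means the list of arcs `l` forms a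
walk from vertex `a` to vertex `b`. -/
inductive IsWalk {V E : Type*} (src tgt : E → V) : V → V → List E → Prop
  | nil (v : V) : IsWalk src tgt v v []
  | cons {e : E} {w : V} {l : List E} (h : IsWalk src tgt (tgt e) w l) :
      IsWalk src tgt (src e) w (e :: l)

/-- `AlmostNodup l`: all entries of `l` are pairwise distinct, except that
possibly the first and last entries coincide. -/
def AlmostNodup {V : Type*} (l : List V) : Prop :=
  l.dropLast.Nodup ∧ l.tail.Nodup

section
variable {V E : Type*} {src tgt : E → V}

lemma isWalk_append {a b c : V} {l₁ l₂ : List E} (h₁ : IsWalk src tgt a b l₁)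
    (h₂ : IsWalk src tgt b c l₂) : IsWalk src tgt a c (l₁ ++ l₂) := by
  induction h₁ with
  | nil => simpa
  | cons h ih => exact IsWalk.cons (ih h₂)

lemma isWalk_split {a c : V} {l : List E} (h : IsWalk src tgt a c l) (k : ℕ)
    (hk : k ≤ l.length) :
    IsWalk src tgt a ((a :: l.map tgt).getD k a) (l.take k) ∧
    IsWalk src tgt ((a :: l.map tgt).getD k a) c (l.drop k) := by
  induction h generalizing k with
  | nil v =>
    simp at hk
    subst hk
    simp [IsWalk.nil]
  | @cons e w l h ih =>
    match k with
    | 0 => exact ⟨by simpa using IsWalk.nil _, by simpa using IsWalk.cons h⟩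
    | k + 1 =>
      simp only [List.length_cons, Nat.add_le_add_iff_right] at hk
      obtain ⟨w1, w2⟩ := ih k hk
      have hd : ((src e :: (e :: l).map tgt).getD (k+1) (src e))
          = ((tgt e :: l.map tgt).getD k (tgt e)) := by
        simp only [List.map_cons, List.getD_cons_succ]
        rw [List.getD_eq_getElem?_getD, List.getD_eq_getElem?_getD]
        have hk' : k < (tgt e :: l.map tgt).length := by simpa using Nat.lt_succ_of_le hk
        rw [List.getElem?_eq_getElem hk']
        rfl
      rw [hd]
      exact ⟨IsWalk.cons w1, by simpa using w2⟩

lemma nodup_almostNodup {l : List V} (h : l.Nodup) : AlmostNodup l :=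
  ⟨h.sublist (List.dropLast_sublist l), h.sublist (List.tail_sublist l)⟩

end

/-- Let `H` be a finite directed multigraph with arcs labeled in a
group `G`, start vertex `s`, final vertex set `Z`. If (a) every walk from `s`
to `Z` whose vertices are pairwise distinct (except possibly initial = final)
has label `e`, and (b) for every vertex `q` from which `Z` is reachable, every
such simple walk `π₁` from `s` to `q` and every closed walk `π₂` at `q` with
distinct intermediate vertices satisfy `l(π₁)·l(π₂)·l(π₁)⁻¹ = e`, then every
walk from `s` into `Z` has label `e`. -/
theorem stmt_12 {V E G : Type*} [Finite V] [Finite E] [Group G]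
    (src tgt : E → V) (lab : E → G) (s : V) (Z : Set V)
    (ha : ∀ z ∈ Z, ∀ π : List E, IsWalk src tgt s z π →
      AlmostNodup (s :: π.map tgt) → (π.map lab).prod = 1)
    (hb : ∀ q : V, (∃ z ∈ Z, ∃ ρ : List E, IsWalk src tgt q z ρ) →
      ∀ π₁ : List E, IsWalk src tgt s q π₁ → AlmostNodup (s :: π₁.map tgt) →
      ∀ π₂ : List E, IsWalk src tgt q q π₂ → AlmostNodup (q :: π₂.map tgt) →
      (π₁.map lab).prod * (π₂.map lab).prod * ((π₁.map lab).prod)⁻¹ = 1) :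
    ∀ z ∈ Z, ∀ π : List E, IsWalk src tgt s z π → (π.map lab).prod = 1 := by
  classical
  suffices H : ∀ n : ℕ, ∀ π : List E, π.length ≤ n → ∀ z ∈ Z,
      IsWalk src tgt s z π → (π.map lab).prod = 1 by
    intro z hz π hπ
    exact H π.length π le_rfl z hz hπ
  intro n
  induction n with
  | zero =>
    intro π hπ z hz hw
    rw [Nat.le_zero, List.length_eq_zero_iff] at hπ
    subst hπ; simp
  | succ m IH =>
    intro π hπ z hz hw
    set vs : List V := s :: π.map tgt with hvs
    have hvslen : vs.length = π.length + 1 := by simp [hvs]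
    by_cases hnd : vs.Nodup
    · exact ha z hz π hw (nodup_almostNodup hnd)
    · have hex : ∃ j, ¬ (vs.take (j+1)).Nodup := by
        refine ⟨π.length, ?_⟩
        rwa [show π.length + 1 = vs.length from hvslen.symm, List.take_length]
      set J := Nat.find hex with hJdef
      have hJspec : ¬ (vs.take (J+1)).Nodup := Nat.find_spec hex
      have hJle : J ≤ π.length := by
        apply Nat.find_le
        rwa [show π.length + 1 = vs.length from hvslen.symm, List.take_length]
      have hJlt : J < vs.length := by omega
      have hJpos : 1 ≤ J := by
        rcases Nat.eq_zero_or_pos J with h0 | h; swap; · exact h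
        exfalso
        apply hJspec
        rw [h0]
        simp [hvs, List.take_cons]
      have hndJ : (vs.take J).Nodup := by
        by_contra hc
        exact Nat.find_min hex (show J - 1 < J by omega)
          (by rwa [Nat.sub_add_cancel hJpos])
      have hmem : vs[J] ∈ vs.take J := by
        by_contra hm
        apply hJspec
        rw [List.take_succ, List.getElem?_eq_getElem hJlt]
        simp only [Option.toList_some]
        rw [List.nodup_append]
        exact ⟨hndJ, List.nodup_singleton _, by simp; intro a ha h; exact hm (h ▸ ha)⟩
      obtain ⟨i, hiJ, hieq⟩ : ∃ i, ∃ _ : i < J, vs[i]'(by omega) = vs[J] := by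
        obtain ⟨i, hi, heq⟩ := List.getElem_of_mem hmem
        have hi' : i < J := by
          simp only [List.length_take] at hi; omega
        exact ⟨i, hi', by rw [← heq, List.getElem_take]⟩
      -- split the walk at position i
      have hil : i ≤ π.length := by omega
      obtain ⟨wα, wδ⟩ := isWalk_split hw i hil
      set q : V := ((s :: π.map tgt).getD i s) with hqdef
      have hilt : i < vs.length := by omega
      have hqi : q = vs[i]'hilt := by
        rw [hqdef, show (s :: π.map tgt) = vs from hvs.symm, List.getD_eq_getElem vs s hilt]
      have hqd : q :: (π.drop i).map tgt = vs.drop i := by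
        rw [List.drop_eq_getElem_cons hilt, ← hqi, hvs, List.drop_succ_cons, List.map_drop]
      have hJil : J - i ≤ (π.drop i).length := by simp; omega
      obtain ⟨wβ, wγ⟩ := isWalk_split wδ (J - i) hJil
      have hq' : ((q :: (π.drop i).map tgt).getD (J - i) q) = q := by
        have hlt : J - i < (vs.drop i).length := by simp; omega
        rw [hqd, List.getD_eq_getElem _ _ hlt, List.getElem_drop]
        have h1 : vs[i + (J - i)]'(by omega) = vs[J]'hJlt := by congr 1; omega
        rw [h1, ← hieq, hqi]
      rw [hq'] at wβ wγ
      set α := π.take i with hα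
      set β := (π.drop i).take (J - i) with hβ
      set γ := (π.drop i).drop (J - i) with hγdef
      have hγ : γ = π.drop J := by rw [hγdef, List.drop_drop]; congr 1; omega
      have hreach : ∃ z' ∈ Z, ∃ ρ, IsWalk src tgt q z' ρ := ⟨z, hz, γ, wγ⟩
      have hanα : AlmostNodup (s :: α.map tgt) := by
        apply nodup_almostNodup
        have h2 : s :: α.map tgt = vs.take (i + 1) := by
          rw [hvs, hα, List.map_take, List.take_succ_cons]
        rw [h2, show vs.take (i+1) = (vs.take J).take (i+1) by
          rw [List.take_take]; congr 1; omega]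
        exact hndJ.sublist (List.take_sublist _ _)
      have hMeq : q :: β.map tgt = (vs.drop i).take (J - i + 1) := by
        rw [← hqd, hβ, List.map_take, List.take_succ_cons]
      have hnotmem : vs[J]'hJlt ∉ (vs.take J).drop (i + 1) := by
        intro hm2
        obtain ⟨k, hk, hkeq⟩ := List.getElem_of_mem hm2
        rw [List.getElem_drop, List.getElem_take] at hkeq
        have hklen : i + 1 + k < J := by
          simp only [List.length_drop, List.length_take] at hk; omega
        have : i + 1 + k = i := by
          have h3 : (vs.take J)[i + 1 + k]'(by simp; omega) = (vs.take J)[i]'(by simp; omega) := by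
            rw [List.getElem_take, List.getElem_take, hkeq, hieq]
          exact (hndJ.getElem_inj_iff).mp h3
        omega
      have hanβ : AlmostNodup (q :: β.map tgt) := by
        rw [hMeq]
        constructor
        · have h4 : ((vs.drop i).take (J - i + 1)).dropLast = (vs.take J).drop i := by
            rw [List.dropLast_eq_take, List.take_take, List.drop_take]
            congr 1
            simp only [List.length_take, List.length_drop]
            omega
          rw [h4]
          exact hndJ.sublist (List.drop_sublist _ _)
        · have h5 : ((vs.drop i).take (J - i + 1)).tail = (vs.drop (i + 1)).take (J - i) := by
            rw [List.drop_eq_getElem_cons hilt, List.take_succ_cons, List.tail_cons]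
          rw [h5]
          have h6 : (vs.drop (i + 1)).take (J - i) = (vs.take (J + 1)).drop (i + 1) := by
            rw [List.drop_take]; congr 1; omega
          rw [h6, List.take_succ, List.getElem?_eq_getElem hJlt]
          simp only [Option.toList_some]
          rw [List.drop_append_of_le_length (by simp; omega), List.nodup_append]
          refine ⟨hndJ.sublist (List.drop_sublist _ _), List.nodup_singleton _, ?_⟩
          simp; intro a ha h; exact hnotmem (h ▸ ha)
      have hb1 := hb q hreach α wα hanα β wβ hanβ
      rw [mul_inv_eq_one, mul_eq_left] at hb1
      have hprod : (π.map lab).prod = ((α ++ γ).map lab).prod := by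
        conv_lhs => rw [← List.take_append_drop i π,
          show π.drop i = β ++ γ from (List.take_append_drop (J - i) (π.drop i)).symm]
        simp only [List.map_append, List.prod_append, hb1, one_mul, hα]
      rw [hprod]
      refine IH (α ++ γ) ?_ z hz (isWalk_append wα wγ)
      have : γ.length = π.length - J := by rw [hγ]; simp
      simp only [List.length_append, hα, List.length_take, this]
      omega
end

section
/- Let Γ be a linear grammar over Σ with transition diagram H labeled in U_G = G × G (via a monoid homomorphism Σ* → G applied to each label component), where G is a group with identity e. Then L(Γ) ⊆ L(G) = {ω ∈ Σ* | φ(ω) = e} if and only if f_d(l_U(D)) ⊆ {e}, where D is the set of all walks in H from A₁ to the sink A_{n+1}, l_U is the U_G-valued label, and f_d(x,y) = x·y in G. -/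
/-- A linear grammar over terminal alphabet `A` with `n` variables. -/
structure LinGrammar (A : Type*) (n : ℕ) where
  P1 : Set (Fin n × List A × Fin n × List A)
  P2 : Set (Fin n × List A)
  start : Fin n

/-- `Derives Γ i w`: the word `w` is derivable from the variable `A_i`. -/
inductive Derives {A : Type*} {n : ℕ} (Γ : LinGrammar A n) : Fin n → List A → Prop
  | base {i : Fin n} {α : List A} : (i, α) ∈ Γ.P2 → Derives Γ i α
  | step {i : Fin n} {α : List A} {j : Fin n} {β : List A} {w : List A} :
      (i, α, j, β) ∈ Γ.P1 → Derives Γ j w → Derives Γ i (α ++ w ++ β)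

/-- `WalkLabelU Γ φ i p`: `p ∈ U_G = G × G` is the `⋄`-label of some walk in the
transition diagram `H` from vertex `A_i` to the sink `A_{n+1}`, where a
production `A_i → α A_j β` gives an arc labeled `(φ α, φ β)`, a production
`A_i → α` gives an arc to the sink labeled `(φ α, e)`, and labels multiply by
`(x,y) ⋄ (z,t) = (xz, ty)`. -/
inductive WalkLabelU {A G : Type*} [Group G] {n : ℕ} (Γ : LinGrammar A n)
    (φ : List A → G) : Fin n → G × G → Prop
  | base {i : Fin n} {α : List A} : (i, α) ∈ Γ.P2 → WalkLabelU Γ φ i (φ α, 1)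
  | step {i : Fin n} {α : List A} {j : Fin n} {β : List A} {p : G × G} :
      (i, α, j, β) ∈ Γ.P1 → WalkLabelU Γ φ j p →
      WalkLabelU Γ φ i (φ α * p.1, p.2 * φ β)


lemma derives_to_walk {A G : Type*} [Group G] {n : ℕ} (Γ : LinGrammar A n)
    (φ : List A → G) (hφm : ∀ u v : List A, φ (u ++ v) = φ u * φ v)
    {i : Fin n} {w : List A} (h : Derives Γ i w) :
    ∃ p : G × G, WalkLabelU Γ φ i p ∧ p.1 * p.2 = φ w := by
  induction h with
  | base h => exact ⟨_, WalkLabelU.base h, mul_one _⟩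
  | step h _ ih =>
      obtain ⟨p, hp, hpe⟩ := ih
      refine ⟨_, WalkLabelU.step h hp, ?_⟩
      simp [hφm, ← hpe, mul_assoc]

lemma walk_to_derives {A G : Type*} [Group G] {n : ℕ} (Γ : LinGrammar A n)
    (φ : List A → G) (hφm : ∀ u v : List A, φ (u ++ v) = φ u * φ v)
    {i : Fin n} {p : G × G} (h : WalkLabelU Γ φ i p) :
    ∃ w : List A, Derives Γ i w ∧ φ w = p.1 * p.2 := by
  induction h with
  | base h => exact ⟨_, Derives.base h, (mul_one _).symm⟩
  | step h _ ih =>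
      obtain ⟨w, hw, hwe⟩ := ih
      refine ⟨_, Derives.step h hw, ?_⟩
      simp [hφm, hwe, mul_assoc]

/-- `L(Γ) ⊆ L(G) = {ω | φ(ω) = e}` iff `f_d(l_U(D)) ⊆ {e}`, where
`D` is the set of all walks from `A₁` to the sink and `f_d(x,y) = x·y`. -/
theorem stmt_17 {A G : Type*} [Group G] {n : ℕ} (Γ : LinGrammar A n)
    (φ : List A → G) (hφ1 : φ [] = 1)
    (hφm : ∀ u v : List A, φ (u ++ v) = φ u * φ v) :
    ({w : List A | Derives Γ Γ.start w} ⊆ {w : List A | φ w = 1}) ↔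
      (∀ p : G × G, WalkLabelU Γ φ Γ.start p → p.1 * p.2 = 1) := by
  constructor
  · intro H p hp
    obtain ⟨w, hw, hwe⟩ := walk_to_derives Γ φ hφm hp
    rw [← hwe]; exact H hw
  · intro H w hw
    obtain ⟨p, hp, hpe⟩ := derives_to_walk Γ φ hφm hw
    have := H p hp
    rw [Set.mem_setOf_eq, ← hpe, this]
end
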